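/- Fix a connected graph G on n vertices with edge set L, and fix index sets R, C ⊆ N with min(|R|, |C|) ≤ n − 1. If the submatrix B_{R,C} of the weighted Laplacian has structural rank equal to min(|R|, |C|) (a property depending only on the topology of G), then for Lebesgue-almost every positive weight vector w ∈ ℝ^L, the submatrix B(w)_{R,C} has rank equal to min(|R|, |C|). -/

import Mathlib

open Matrix

/-- The incidence vector `m_e ∈ ℝ^n` of the pair of vertices `(i, j)`:
`m_e(i) = 1`, `m_e(j) = -1`, `0` elsewhere. -/
def incVec {n : ℕ} (i j : Fin n) : Fin n → ℝ :=
  fun a => if a = i then 1 else if a = j then -1 else 0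

/-- The rank-one matrix `m_e m_eᵀ`, which is well defined on unordered pairs. -/
def edgeOuter {n : ℕ} : Sym2 (Fin n) → Matrix (Fin n) (Fin n) ℝ :=
  Sym2.lift ⟨fun i j => vecMulVec (incVec i j) (incVec i j), by
    intro i j
    ext a b
    simp only [vecMulVec_apply, incVec]
    split_ifs <;> simp_all⟩

/-- The weighted Laplacian `B = Σ_{e ∈ L} w_e · m_e m_eᵀ` of the graph `G`
with edge weights `w`. -/
noncomputable def lap {n : ℕ} (G : SimpleGraph (Fin n)) [DecidableRel G.Adj]
    (w : Sym2 (Fin n) → ℝ) : Matrix (Fin n) (Fin n) ℝ :=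
  ∑ e ∈ G.edgeFinset, w e • edgeOuter e

/-- `ΔP` is an unobservable attack w.r.t. the Laplacian `B` and measured buses `M`:
`ΔP ≠ 0`, and `ΔP = B·Δθ` for some `Δθ` vanishing on `M`. -/
def Unobservable {n : ℕ} (B : Matrix (Fin n) (Fin n) ℝ) (M : Finset (Fin n))
    (ΔP : Fin n → ℝ) : Prop :=
  ΔP ≠ 0 ∧ ∃ Δθ : Fin n → ℝ, ΔP = B.mulVec Δθ ∧ ∀ i ∈ M, Δθ i = 0

/-- `‖v‖₀`: the number of nonzero entries of `v`. -/
noncomputable def sparsity {n : ℕ} (v : Fin n → ℝ) : ℕ := (Function.support v).ncard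

/-- The open neighborhood `N(S) = {j ∉ S : j adjacent to some vertex of S}`. -/
def nbhd {n : ℕ} (G : SimpleGraph (Fin n)) [DecidableRel G.Adj] (S : Finset (Fin n)) :
    Finset (Fin n) :=
  Finset.univ.filter fun j => j ∉ S ∧ ∃ i ∈ S, G.Adj j i

/-- The closed neighborhood `N[S] = S ∪ N(S)`. -/
def closedNbhd {n : ℕ} (G : SimpleGraph (Fin n)) [DecidableRel G.Adj] (S : Finset (Fin n)) :
    Finset (Fin n) :=
  S ∪ nbhd G S

/-- `S` is a vulnerable set: a nonempty `S ⊆ Mᶜ` such that the number of alterable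
buses in `N[S]` is at least `|N(S)| + 1` (i.e. `N(S)` is a vulnerable vertex cut of
the augmented graph `G^M`). -/
def VulnerableSet {n : ℕ} (G : SimpleGraph (Fin n)) [DecidableRel G.Adj]
    (M U S : Finset (Fin n)) : Prop :=
  S.Nonempty ∧ S ⊆ Mᶜ ∧ (nbhd G S).card + 1 ≤ (Uᶜ ∩ closedNbhd G S).card

open MeasureTheory

/-- The weighted Laplacian `B(w) = Σ_{e ∈ L} w_e · m_e m_eᵀ`, with the edge weights
given as a vector `w ∈ ℝ^L` indexed by the edge set. -/
noncomputable def lapW {n : ℕ} (G : SimpleGraph (Fin n)) [DecidableRel G.Adj]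
    (w : G.edgeSet → ℝ) : Matrix (Fin n) (Fin n) ℝ :=
  ∑ e : G.edgeSet, w e • edgeOuter (e : Sym2 (Fin n))

/-- A set of independent entries of a matrix: nonzero entries no two of which lie in
the same row or the same column. -/
def IsIndepEntrySet {α β : Type*} (H : Matrix α β ℝ) (s : Finset (α × β)) : Prop :=
  (∀ p ∈ s, H p.1 p.2 ≠ 0) ∧ ∀ p ∈ s, ∀ q ∈ s, p ≠ q → p.1 ≠ q.1 ∧ p.2 ≠ q.2

/-- The structural rank of a matrix: the maximum cardinality of a set of
independent entries. -/
noncomputable def spr {α β : Type*} [Fintype α] [Fintype β] (H : Matrix α β ℝ) : ℕ :=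
  sSup {k : ℕ | ∃ s : Finset (α × β), IsIndepEntrySet H s ∧ s.card = k}



section AuxMeas
open MeasureTheory


lemma continuous_mvpolyeval {m : ℕ} (p : MvPolynomial (Fin (m+1)) ℝ) :
    Continuous (fun sy : (Fin m → ℝ) × ℝ => MvPolynomial.eval (Fin.cons sy.2 sy.1) p) := by
  apply p.continuous_eval.comp
  apply continuous_pi
  intro i
  induction i using Fin.cases with
  | zero => simpa using continuous_snd
  | succ j => simpa using (by fun_prop : Continuous fun a : (Fin m → ℝ) × ℝ => a.1 j)

lemma mvpoly_zero_null : ∀ {m : ℕ} (p : MvPolynomial (Fin m) ℝ), p ≠ 0 →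
    volume {x : Fin m → ℝ | MvPolynomial.eval x p = 0} = 0 := by
  intro m
  induction m with
  | zero =>
    intro p hp
    obtain ⟨a, rfl⟩ := MvPolynomial.C_surjective (Fin 0) p
    have ha : a ≠ 0 := fun h => hp (by rw [h, map_zero])
    convert measure_empty
    · ext x; simp [ha]
    · infer_instance
  | succ m ih =>
    intro p hp
    set q : Polynomial (MvPolynomial (Fin m) ℝ) := MvPolynomial.finSuccEquiv ℝ m p with hq
    have hq0 : q ≠ 0 := by
      simp only [hq, Ne, EmbeddingLike.map_eq_zero_iff]; exact hp
    obtain ⟨i0, hi0⟩ : ∃ i, q.coeff i ≠ 0 := by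
      by_contra h
      push_neg at h
      exact hq0 (Polynomial.ext fun i => h i)
    -- the bad set in (Fin m → ℝ) × ℝ coordinates
    set A : Set ((Fin m → ℝ) × ℝ) :=
      {sy | MvPolynomial.eval (Fin.cons sy.2 sy.1) p = 0} with hA
    have hAmeas : MeasurableSet A :=
      (isClosed_eq (continuous_mvpolyeval p) continuous_const).measurableSet
    have hAnull : (volume : Measure ((Fin m → ℝ) × ℝ)) A = 0 := by
      have : (volume : Measure ((Fin m → ℝ) × ℝ)) = (volume : Measure (Fin m → ℝ)).prod volume := rfl
      rw [this, Measure.measure_prod_null hAmeas]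
      have hN := ih (q.coeff i0) hi0
      filter_upwards [measure_eq_zero_iff_ae_notMem.mp hN] with s hs
      have hqs : q.map (MvPolynomial.eval s) ≠ 0 := by
        intro h
        apply hs
        have := congrArg (fun r => Polynomial.coeff r i0) h
        simpa [Polynomial.coeff_map] using this
      have : (Prod.mk s ⁻¹' A) = {y | Polynomial.IsRoot (q.map (MvPolynomial.eval s)) y} := by
        ext y
        simp only [hA, Set.mem_preimage, Set.mem_setOf_eq, Polynomial.IsRoot]
        rw [MvPolynomial.eval_eq_eval_mv_eval']
      rw [this]
      exact (Polynomial.finite_setOf_isRoot hqs).measure_zero _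
    -- transfer via the measurable equiv
    have hmp := (measurePreserving_piFinSuccAbove (fun _ : Fin (m+1) => (volume : Measure ℝ)) 0)
    set κ := MeasurableEquiv.piFinSuccAbove (fun _ : Fin (m+1) => ℝ) 0 with hκ
    have swap_mp : MeasurePreserving (Prod.swap : ℝ × (Fin m → ℝ) → (Fin m → ℝ) × ℝ)
        ((volume : Measure ℝ).prod volume) ((volume : Measure (Fin m → ℝ)).prod volume) :=
      Measure.measurePreserving_swap
    have hTmeas : MeasurableSet {x : Fin (m+1) → ℝ | MvPolynomial.eval x p = 0} :=
      (isClosed_eq p.continuous_eval continuous_const).measurableSet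
    have hpre : κ.symm ⁻¹' {x : Fin (m+1) → ℝ | MvPolynomial.eval x p = 0}
        = Prod.swap ⁻¹' A := by
      ext ys
      simp only [Set.mem_preimage, Set.mem_setOf_eq, hκ, hA,
        MeasurableEquiv.piFinSuccAbove_symm_apply, Prod.fst_swap, Prod.snd_swap]
      rw [show ((Fin.insertNthEquiv (fun _ => ℝ) 0) ys) = Fin.insertNth 0 ys.1 ys.2 from rfl,
        Fin.insertNth_zero']
    have h1 : (volume : Measure (Fin (m+1) → ℝ)) {x | MvPolynomial.eval x p = 0}
        = ((volume : Measure ℝ).prod (volume : Measure (Fin m → ℝ)))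
            (κ.symm ⁻¹' {x | MvPolynomial.eval x p = 0}) := by
      rw [volume_pi]
      exact (hmp.symm κ).measure_preimage hTmeas.nullMeasurableSet |>.symm
    rw [h1, hpre, swap_mp.measure_preimage hAmeas.nullMeasurableSet]
    exact hAnull

lemma mvpoly_zero_null_fintype {σ : Type*} [Fintype σ] (p : MvPolynomial σ ℝ) (hp : p ≠ 0) :
    volume {w : σ → ℝ | MvPolynomial.eval w p = 0} = 0 := by
  classical
  set m := Fintype.card σ
  set e : Fin m ≃ σ := (Fintype.equivFin σ).symm with he
  set φ := MeasurableEquiv.piCongrLeft (fun _ : σ => ℝ) e with hφ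
  have hmp : MeasurePreserving φ volume volume :=
    volume_measurePreserving_piCongrLeft _ e
  set Z := {w : σ → ℝ | MvPolynomial.eval w p = 0} with hZ
  have hZmeas : MeasurableSet Z :=
    (isClosed_eq p.continuous_eval continuous_const).measurableSet
  have h1 : volume Z = volume (φ ⁻¹' Z) := (hmp.measure_preimage hZmeas.nullMeasurableSet).symm
  have hφx : ∀ x : Fin m → ℝ, (φ x : σ → ℝ) = x ∘ e.symm := by
    intro x
    funext s
    have : s = e (e.symm s) := (e.apply_symm_apply s).symm
    rw [this]
    simp only [hφ, MeasurableEquiv.coe_piCongrLeft]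
    rw [Equiv.piCongrLeft_apply_apply]
    simp
  have h2 : φ ⁻¹' Z = {x : Fin m → ℝ | MvPolynomial.eval x (MvPolynomial.rename e.symm p) = 0} := by
    ext x
    simp only [Set.mem_preimage, hZ, Set.mem_setOf_eq, MvPolynomial.eval_rename, hφx x]
  have hp' : MvPolynomial.rename (⇑e.symm) p ≠ 0 := by
    intro h
    exact hp ((MvPolynomial.rename_injective _ e.symm.injective) (by rw [h, map_zero]))
  rw [h1, h2]
  exact mvpoly_zero_null _ hp'

open Matrix in
lemma det_ne_zero_of_tri {k : ℕ} (M : Matrix (Fin k) (Fin k) ℝ) (h : Fin k → ℕ)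
    (hd : ∀ t, M t t ≠ 0) (ho : ∀ t t', t ≠ t' → M t t' ≠ 0 → h t < h t') :
    M.det ≠ 0 := by
  have hli : LinearIndependent ℝ (fun i => M i) := by
    rw [Fintype.linearIndependent_iff]
    intro g hg
    by_contra hc
    push_neg at hc
    obtain ⟨i, hi⟩ := hc
    have hs : (Finset.univ.filter (fun i => g i ≠ 0)).Nonempty :=
      ⟨i, by simp [hi]⟩
    obtain ⟨i0, hi0mem, hi0min⟩ := Finset.exists_min_image _ h hs
    simp only [Finset.mem_filter] at hi0mem
    have hcol := congrFun hg i0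
    rw [Finset.sum_apply] at hcol
    have : ∑ t, (g t • M t) i0 = g i0 * M i0 i0 := by
      apply Finset.sum_eq_single
      · intro t _ ht
        by_cases hgt : g t = 0
        · simp [hgt]
        · by_cases hMt : M t i0 = 0
          · simp [Pi.smul_apply, hMt]
          · exfalso
            have h1 := ho t i0 ht hMt
            have h2 := hi0min t (by simp [hgt])
            omega
      · intro ht; exact absurd (Finset.mem_univ i0) ht
    rw [this] at hcol
    exact hi0mem.2 (by
      rcases mul_eq_zero.mp hcol with h' | h'
      · exact h'
      · exact absurd h' (hd i0))
  have : IsUnit M := Matrix.linearIndependent_rows_iff_isUnit.mp hli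
  exact ((Matrix.isUnit_iff_isUnit_det M).mp this).ne_zero

open Matrix in
lemma rank_submatrix_le' {l o m n : Type*} [Fintype l] [Fintype o] [Fintype m] [Fintype n]
    [DecidableEq m] [DecidableEq n]
    (A : Matrix m n ℝ) (f : l → m) (g : o → n) :
    (A.submatrix f g).rank ≤ A.rank := by
  let Q : Matrix l m ℝ := fun i a => if a = f i then 1 else 0
  let P : Matrix n o ℝ := fun b j => if b = g j then 1 else 0
  have hfac : A.submatrix f g = Q * (A * P) := by
    ext i j
    simp only [Matrix.mul_apply, submatrix_apply]
    simp only [Q, P]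
    rw [Finset.sum_eq_single (f i)]
    · simp only [if_pos rfl, one_mul]
      rw [Finset.sum_eq_single (g j)]
      · simp
      · intro b _ hb; simp [hb]
      · intro hb; exact absurd (Finset.mem_univ _) hb
    · intro a _ ha; simp [ha]
    · intro hb; exact absurd (Finset.mem_univ _) hb
  rw [hfac]
  exact (Matrix.rank_mul_le_right _ _).trans (Matrix.rank_mul_le_left _ _)

end AuxMeas

set_option linter.unusedSectionVars false

open Finset

section Boundary
variable {V : Type*} [Fintype V] [DecidableEq V] (G : SimpleGraph V)

lemma walk_boundary {a b : V} (p : G.Walk a b) (D : Finset V) (ha : a ∈ D) (hb : b ∉ D) :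
    ∃ v ∈ D, ∃ y, y ∉ D ∧ G.Adj v y := by
  induction p with
  | nil => exact absurd ha hb
  | @cons u x b h p ih =>
    by_cases hx : x ∈ D
    · exact ih hx hb
    · exact ⟨u, ha, x, hx, h⟩

lemma exists_boundary (hG : G.Connected) (D : Finset V) (hne : D.Nonempty)
    (hD : D ≠ Finset.univ) : ∃ v ∈ D, ∃ y, y ∉ D ∧ G.Adj v y := by
  obtain ⟨a, ha⟩ := hne
  obtain ⟨b, hb⟩ : ∃ b, b ∉ D := by
    by_contra h
    push_neg at h
    exact hD (Finset.eq_univ_iff_forall.mpr h)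
  obtain ⟨p⟩ := hG.preconnected a b
  exact walk_boundary G p D ha hb

lemma exists_ordering [Nonempty V] (hG : G.Connected) :
    ∀ (N : ℕ) (D : Finset V), D.card ≤ N → D ≠ Finset.univ →
    ∃ (ord : V → ℕ) (y : V → V),
      (∀ v ∈ D, G.Adj v (y v)) ∧ (∀ v ∈ D, ord v < D.card) ∧
      (∀ v ∈ D, y v ∈ D → ord v < ord (y v)) := by
  intro N
  induction N with
  | zero =>
    intro D hcard _
    have : D = ∅ := Finset.card_eq_zero.mp (Nat.le_zero.mp hcard)
    subst this
    exact ⟨fun _ => 0, fun v => v, by simp, by simp, by simp⟩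
  | succ N ih =>
    intro D hcard hD
    rcases Finset.eq_empty_or_nonempty D with rfl | hne
    · exact ⟨fun _ => 0, fun v => v, by simp, by simp, by simp⟩
    obtain ⟨vs, hvs, ys, hys, hadj⟩ := exists_boundary G hG D hne hD
    have hD' : D.erase vs ≠ Finset.univ := by
      intro h
      have : vs ∈ D.erase vs := h ▸ Finset.mem_univ vs
      exact (Finset.notMem_erase vs D) this
    have hcard' : (D.erase vs).card ≤ N := by
      have := Finset.card_erase_of_mem hvs
      omega
    obtain ⟨ord', y', hady', hbd', hlt'⟩ := ih (D.erase vs) hcard' hD'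
    classical
    refine ⟨fun v => if v = vs then D.card - 1 else ord' v,
            fun v => if v = vs then ys else y' v, ?_, ?_, ?_⟩
    · intro v hv
      by_cases h : v = vs
      · subst h; simpa using hadj
      · simpa [h] using hady' v (Finset.mem_erase.mpr ⟨h, hv⟩)
    · intro v hv
      have hc1 : 1 ≤ D.card := Finset.card_pos.mpr ⟨vs, hvs⟩
      by_cases h : v = vs
      · subst h; simp only [eq_self_iff_true, if_true]; omega
      · have := hbd' v (Finset.mem_erase.mpr ⟨h, hv⟩)
        have hce := Finset.card_erase_of_mem hvs
        simp only [if_neg h]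
        omega
    · intro v hv hyv
      by_cases h : v = vs
      · subst h
        simp only [if_pos rfl] at hyv
        exact absurd hyv hys
      · simp only [if_neg h] at hyv ⊢
        have hvD' : v ∈ D.erase vs := Finset.mem_erase.mpr ⟨h, hv⟩
        by_cases h2 : y' v = vs
        · have := hbd' v hvD'
          have hce := Finset.card_erase_of_mem hvs
          rw [h2]
          simp only [eq_self_iff_true, if_true]
          omega
        · simp only [if_neg h2]
          exact hlt' v hvD' (Finset.mem_erase.mpr ⟨h2, hyv⟩)

end Boundary

section Cert
open Relation
variable {n k : ℕ}

theorem exists_cert (G : SimpleGraph (Fin n)) [DecidableRel G.Adj] (hG : G.Connected)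
    (hk : k < n)
    (r c : Fin k → Fin n) (hr : Function.Injective r) (hc : Function.Injective c)
    (hco : ∀ i, r i = c i ∨ G.Adj (r i) (c i)) :
    ∃ (a b fR fC : Fin k → Fin n) (hR hC : Fin k → ℕ),
      (∀ i, G.Adj (a i) (b i)) ∧
      (∀ i i', ((a i = a i' ∧ b i = b i') ∨ (a i = b i' ∧ b i = a i')) → i = i') ∧
      Function.Injective fR ∧ Function.Injective fC ∧
      (∀ i, ∃ j, fR i = r j) ∧ (∀ i, ∃ j, fC i = c j) ∧
      (∀ i, fR i = a i ∨ fR i = b i) ∧ (∀ i, fC i = a i ∨ fC i = b i) ∧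
      (∀ i i', i ≠ i' → (fR i' = a i ∨ fR i' = b i) → hR i < hR i') ∧
      (∀ i i', i ≠ i' → (fC i' = a i ∨ fC i' = b i) → hC i < hC i') := by
  classical
  have hn : Nonempty (Fin n) := ⟨⟨0, Nat.lt_of_le_of_lt (Nat.zero_le k) hk⟩⟩
  -- Step 1: pick a valid matching maximizing the number of diagonal pairs
  let Valid : (Fin k → Fin n) × (Fin k → Fin n) → Prop := fun p =>
    Function.Injective p.1 ∧ Function.Injective p.2 ∧
    (∀ i, p.1 i = p.2 i ∨ G.Adj (p.1 i) (p.2 i)) ∧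
    Set.range p.1 = Set.range r ∧ Set.range p.2 = Set.range c
  let T : Finset ((Fin k → Fin n) × (Fin k → Fin n)) := Finset.univ.filter Valid
  have hT : (r, c) ∈ T := by
    simp only [T, Finset.mem_filter, Finset.mem_univ, true_and]
    exact ⟨hr, hc, hco, rfl, rfl⟩
  obtain ⟨p, hpT, hpmax⟩ := Finset.exists_max_image T
    (fun p => (Finset.univ.filter (fun i => p.1 i = p.2 i)).card) ⟨_, hT⟩
  set r' := p.1 with hr'def
  set c' := p.2 with hc'def
  have hpT' : Valid p := (Finset.mem_filter.mp hpT).2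
  obtain ⟨hr', hc', hco', hrange_r, hrange_c⟩ := hpT'
  -- Step 2: the successor relation has no cycles
  let prec : Fin k → Fin k → Prop := fun i j => r' i ≠ c' i ∧ c' i = r' j
  have prec_func : ∀ {i j j'}, prec i j → prec i j' → j = j' := by
    intro i j j' h1 h2
    exact hr' (h1.2.symm.trans h2.2)
  have prec_inj : ∀ {i i' j}, prec i j → prec i' j → i = i' := by
    intro i i' j h1 h2
    exact hc' (h1.2.trans h2.2.symm)
  have acyclic : ∀ j, ¬ Relation.TransGen prec j j := by
    by_contra hcyc
    push_neg at hcyc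
    obtain ⟨j0, hj0⟩ := hcyc
    set O : Finset (Fin k) := Finset.univ.filter (fun j => Relation.TransGen prec j j) with hO
    have hj0O : j0 ∈ O := by simp [hO, hj0]
    have hOsucc : ∀ j ∈ O, ∃ j', prec j j' ∧ j' ∈ O := by
      intro j hj
      simp only [hO, Finset.mem_filter, Finset.mem_univ, true_and] at hj
      obtain ⟨b, hb1, hb2⟩ := Relation.TransGen.head'_iff.mp hj
      exact ⟨b, hb1, by
        simp only [hO, Finset.mem_filter, Finset.mem_univ, true_and]
        exact Relation.TransGen.tail' hb2 hb1⟩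
    have hOpred : ∀ j ∈ O, ∃ x, prec x j ∧ x ∈ O := by
      intro j hj
      simp only [hO, Finset.mem_filter, Finset.mem_univ, true_and] at hj
      obtain ⟨b, hb1, hb2⟩ := Relation.TransGen.tail'_iff.mp hj
      exact ⟨b, hb2, by
        simp only [hO, Finset.mem_filter, Finset.mem_univ, true_and]
        exact Relation.TransGen.head' hb2 hb1⟩
    set c2 : Fin k → Fin n := fun j => if j ∈ O then r' j else c' j with hc2
    have hdiagO : ∀ j ∈ O, r' j ≠ c' j := by
      intro j hj
      obtain ⟨j', hj', _⟩ := hOsucc j hj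
      exact hj'.1
    have key : ∀ u v, u ∉ O → v ∈ O → c' u = r' v → False := by
      intro u v hu hv huv
      by_cases hdu : r' u = c' u
      · exact hu (by rwa [← hr' (hdu.trans huv)] at hv)
      · obtain ⟨x, hx, hxO⟩ := hOpred v hv
        exact hu (by rwa [prec_inj (⟨hdu, huv⟩ : prec u v) hx])
    have hc2inj : Function.Injective c2 := by
      intro u v huv
      simp only [hc2] at huv
      by_cases hu : u ∈ O <;> by_cases hv : v ∈ O
      · rw [if_pos hu, if_pos hv] at huv; exact hr' huv
      · rw [if_pos hu, if_neg hv] at huv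
        exact absurd huv.symm (fun h => key v u hv hu h)
      · rw [if_neg hu, if_pos hv] at huv
        exact absurd huv (fun h => key u v hu hv h)
      · rw [if_neg hu, if_neg hv] at huv; exact hc' huv
    have hrange2 : Set.range c2 = Set.range c' := by
      apply Set.eq_of_subset_of_subset
      · rintro x ⟨j, rfl⟩
        simp only [hc2]
        by_cases hj : j ∈ O
        · rw [if_pos hj]
          obtain ⟨y, hy, _⟩ := hOpred j hj
          exact ⟨y, hy.2⟩
        · rw [if_neg hj]; exact ⟨j, rfl⟩
      · rintro x ⟨j, rfl⟩
        by_cases hj : j ∈ O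
        · obtain ⟨j', hj', hj'O⟩ := hOsucc j hj
          exact ⟨j', by simp only [hc2, if_pos hj'O]; exact hj'.2.symm⟩
        · exact ⟨j, by simp only [hc2, if_neg hj]⟩
    have hvalid2 : (r', c2) ∈ T := by
      simp only [T, Finset.mem_filter, Finset.mem_univ, true_and]
      refine ⟨hr', hc2inj, ?_, hrange_r, hrange2.trans hrange_c⟩
      intro i
      simp only [hc2]
      by_cases hi : i ∈ O
      · rw [if_pos hi]; exact Or.inl rfl
      · rw [if_neg hi]; exact hco' i
    -- more diagonal pairs: contradiction with maximality
    have hsub : Finset.univ.filter (fun i => r' i = c' i) ⊂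
        Finset.univ.filter (fun i => r' i = c2 i) := by
      constructor
      · intro i hi
        simp only [Finset.mem_filter, Finset.mem_univ, true_and] at hi ⊢
        have hiO : i ∉ O := fun h => hdiagO i h hi
        simp only [hc2, if_neg hiO]
        exact hi
      · intro hsub2
        have := hsub2 (by
          simp only [Finset.mem_filter, Finset.mem_univ, true_and, hc2, if_pos hj0O] :
          j0 ∈ Finset.univ.filter (fun i => r' i = c2 i))
        simp only [Finset.mem_filter, Finset.mem_univ, true_and] at this
        exact hdiagO j0 hj0O this
    have hlt := Finset.card_lt_card hsub
    have := hpmax (r', c2) hvalid2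
    simp only [hr'def, hc'def] at this hlt
    omega
  -- Step 3: order the diagonal vertices
  haveI := hn
  set DV : Finset (Fin n) := (Finset.univ.filter (fun i => r' i = c' i)).image r' with hDV
  have hDVcard : DV.card ≤ k := by
    refine le_trans Finset.card_image_le (le_trans (Finset.card_filter_le _ _) ?_)
    simp
  have hDVne : DV ≠ Finset.univ := by
    intro h
    have : (Finset.univ : Finset (Fin n)).card = n := by simp
    rw [← h] at this
    omega
  obtain ⟨ordD, y, hyadj, hordbd, hordlt⟩ := exists_ordering G hG DV.card DV le_rfl hDVne
  have hrDV : ∀ i, r' i = c' i → r' i ∈ DV := by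
    intro i hi
    simp only [hDV, Finset.mem_image]
    exact ⟨i, by simp [hi], rfl⟩
  -- Step 4: assemble the certificate
  set pc : Fin k → ℕ := fun i => (Finset.univ.filter (fun x => Relation.TransGen prec x i)).card
    with hpc
  set sc : Fin k → ℕ := fun i => (Finset.univ.filter (fun x => Relation.TransGen prec i x)).card
    with hsc
  have pc_mono : ∀ {i j}, prec i j → pc i < pc j := by
    intro i j hij
    apply Finset.card_lt_card
    constructor
    · intro x hx
      simp only [Finset.mem_filter, Finset.mem_univ, true_and] at hx ⊢
      exact hx.tail hij
    · intro hsub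
      have hi := hsub (by
        simp only [Finset.mem_filter, Finset.mem_univ, true_and]
        exact Relation.TransGen.single hij)
      simp only [Finset.mem_filter, Finset.mem_univ, true_and] at hi
      exact acyclic i hi
  have sc_mono : ∀ {i j}, prec i j → sc j < sc i := by
    intro i j hij
    apply Finset.card_lt_card
    constructor
    · intro x hx
      simp only [Finset.mem_filter, Finset.mem_univ, true_and] at hx ⊢
      exact Relation.TransGen.head hij hx
    · intro hsub
      have hi := hsub (by
        simp only [Finset.mem_filter, Finset.mem_univ, true_and]
        exact Relation.TransGen.single hij)
      simp only [Finset.mem_filter, Finset.mem_univ, true_and] at hi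
      exact acyclic j hi
  set b : Fin k → Fin n := fun i => if r' i = c' i then y (r' i) else c' i with hb
  set hRf : Fin k → ℕ := fun i => if r' i = c' i then ordD (r' i) else k + pc i with hhRf
  set hCf : Fin k → ℕ := fun i => if r' i = c' i then ordD (r' i) else k + sc i with hhCf
  refine ⟨r', b, r', c', hRf, hCf, ?_, ?_, hr', hc', ?_, ?_, ?_, ?_, ?_, ?_⟩
  · -- adjacency
    intro i
    by_cases hi : r' i = c' i
    · simp only [hb, if_pos hi]
      exact hyadj (r' i) (hrDV i hi)
    · simp only [hb, if_neg hi]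
      exact (hco' i).resolve_left hi
  · -- injectivity of the edge assignment
    intro i i' hcase
    rcases hcase with ⟨h1, h2⟩ | ⟨h1, h2⟩
    · exact hr' h1
    · -- r' i = b i' and b i = r' i'
      by_cases hi : r' i = c' i <;> by_cases hi' : r' i' = c' i'
      · simp only [hb, if_pos hi, if_pos hi'] at h1 h2
        by_cases hii : i = i'
        · exact hii
        exfalso
        have o1 := hordlt (r' i') (hrDV i' hi') (by rw [← h1]; exact hrDV i hi)
        have o2 := hordlt (r' i) (hrDV i hi) (by rw [h2]; exact hrDV i' hi')
        rw [← h1] at o1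
        rw [h2] at o2
        omega
      · simp only [hb, if_pos hi, if_neg hi'] at h1 h2
        -- h1 : r' i = c' i', h2 : y (r' i) = r' i'
        exact hc' ((hi.symm.trans h1))
      · simp only [hb, if_neg hi, if_pos hi'] at h1 h2
        -- h1 : r' i = y (r' i'), h2 : c' i = r' i'
        exact hc' (h2.trans hi')
      · simp only [hb, if_neg hi, if_neg hi'] at h1 h2
        by_cases hii : i = i'
        · exact hii
        exfalso
        have t1 : Relation.TransGen prec i i' := Relation.TransGen.single ⟨hi, h2⟩
        exact acyclic i (t1.tail ⟨hi', h1.symm⟩)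
  · -- range of fR
    intro i
    have : r' i ∈ Set.range r := hrange_r ▸ Set.mem_range_self i
    obtain ⟨j, hj⟩ := this
    exact ⟨j, hj.symm⟩
  · -- range of fC
    intro i
    have : c' i ∈ Set.range c := hrange_c ▸ Set.mem_range_self i
    obtain ⟨j, hj⟩ := this
    exact ⟨j, hj.symm⟩
  · intro i; exact Or.inl rfl
  · -- fC endpoint
    intro i
    by_cases hi : r' i = c' i
    · exact Or.inl hi.symm
    · right; simp only [hb, if_neg hi]
  · -- triangularity R
    intro i i' hne hcase
    rcases hcase with h1 | h1
    · exact absurd (hr' h1).symm hne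
    by_cases hi : r' i = c' i
    · simp only [hb, if_pos hi] at h1
      by_cases hi' : r' i' = c' i'
      · have := hordlt (r' i) (hrDV i hi) (by rw [← h1]; exact hrDV i' hi')
        rw [← h1] at this
        simp only [hhRf, if_pos hi, if_pos hi']
        exact this
      · simp only [hhRf, if_pos hi, if_neg hi']
        have := hordbd (r' i) (hrDV i hi)
        omega
    · simp only [hb, if_neg hi] at h1
      by_cases hi' : r' i' = c' i'
      · exact absurd (hc' (hi'.symm.trans h1)) hne.symm
      · simp only [hhRf, if_neg hi, if_neg hi']
        have := pc_mono (⟨hi, h1.symm⟩ : prec i i')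
        omega
  · -- triangularity C
    intro i i' hne hcase
    rcases hcase with h1 | h1
    · -- c' i' = r' i
      by_cases hi' : r' i' = c' i'
      · exact absurd (hr' (hi'.trans h1)) hne.symm
      by_cases hi : r' i = c' i
      · exact absurd (hc' (h1.trans hi)) hne.symm
      · simp only [hhCf, if_neg hi, if_neg hi']
        have := sc_mono (⟨hi', h1⟩ : prec i' i)
        omega
    · by_cases hi : r' i = c' i
      · simp only [hb, if_pos hi] at h1
        by_cases hi' : r' i' = c' i'
        · have he : y (r' i) = r' i' := (hi'.trans h1).symm
          have := hordlt (r' i) (hrDV i hi) (by rw [he]; exact hrDV i' hi')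
          rw [he] at this
          simp only [hhCf, if_pos hi, if_pos hi']
          exact this
        · simp only [hhCf, if_pos hi, if_neg hi']
          have := hordbd (r' i) (hrDV i hi)
          omega
      · simp only [hb, if_neg hi] at h1
        exact absurd (hc' h1) hne.symm

end Cert


section DefAux
variable {n : ℕ}

lemma edgeOuter_mk (x y p q : Fin n) :
    edgeOuter s(x, y) p q = incVec x y p * incVec x y q := by
  simp [edgeOuter, Matrix.vecMulVec_apply]

lemma incVec_end_ne_zero (x y v : Fin n) (h : v = x ∨ v = y) : incVec x y v ≠ 0 := by
  rcases h with h | h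
  · subst h; simp [incVec]
  · subst h
    by_cases h2 : v = x
    · subst h2; simp [incVec]
    · simp [incVec, h2]

lemma incVec_ne_zero_imp (x y v : Fin n) (h : incVec x y v ≠ 0) : v = x ∨ v = y := by
  by_contra hc
  push_neg at hc
  exact h (by simp only [incVec, if_neg hc.1, if_neg hc.2])

lemma lap_one_pattern (G : SimpleGraph (Fin n)) [DecidableRel G.Adj] (p q : Fin n)
    (hpq : p ≠ q) (hadj : ¬ G.Adj p q) : lap G (fun _ => 1) p q = 0 := by
  classical
  rw [lap]
  rw [Matrix.sum_apply]
  apply Finset.sum_eq_zero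
  intro e he
  rw [SimpleGraph.mem_edgeFinset] at he
  induction e with
  | _ x y =>
    have hxy : G.Adj x y := he
    simp only [Matrix.smul_apply, one_smul, edgeOuter_mk]
    by_cases h1 : incVec x y p = 0
    · rw [h1, zero_mul]
    by_cases h2 : incVec x y q = 0
    · rw [h2, mul_zero]
    exfalso
    rcases incVec_ne_zero_imp x y p h1 with hp | hp <;>
      rcases incVec_ne_zero_imp x y q h2 with hq | hq <;> subst hp <;> subst hq
    · exact hpq rfl
    · exact hadj hxy
    · exact hadj hxy.symm
    · exact hpq rfl

end DefAux

/-- Fix a connected graph `G` on `n ≥ 2` vertices and index sets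
`R, C` with `min(|R|,|C|) ≤ n - 1`.  If the submatrix `B_{R,C}` of the Laplacian has
structural rank `min(|R|,|C|)` (a property of the topology alone, here expressed via
the all-ones weights), then for Lebesgue-almost every positive weight vector
`w ∈ ℝ^L` the submatrix `B(w)_{R,C}` has rank `min(|R|,|C|)`. -/
theorem rank_eq_structuralRank_ae {n : ℕ} (hn : 2 ≤ n)
    (G : SimpleGraph (Fin n)) [DecidableRel G.Adj] (hG : G.Connected)
    (R C : Finset (Fin n)) (hmin : min R.card C.card ≤ n - 1)
    (hspr : spr ((lap G fun _ => 1).submatrix (fun i : (R : Finset (Fin n)) => (i : Fin n))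
        (fun j : (C : Finset (Fin n)) => (j : Fin n))) = min R.card C.card) :
    MeasureTheory.volume {w : G.edgeSet → ℝ | (∀ e, 0 < w e) ∧
      ((lapW G w).submatrix (fun i : (R : Finset (Fin n)) => (i : Fin n))
        (fun j : (C : Finset (Fin n)) => (j : Fin n))).rank ≠ min R.card C.card} = 0 := by
  classical
  set k := min R.card C.card with hkdef
  -- extract a maximum independent entry set from the structural rank hypothesis
  set H := (lap G fun _ => 1).submatrix (fun i : (R : Finset (Fin n)) => (i : Fin n))
      (fun j : (C : Finset (Fin n)) => (j : Fin n)) with hHdef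
  have hmem : k ∈ {j : ℕ | ∃ s : Finset (↥R × ↥C), IsIndepEntrySet H s ∧ s.card = j} := by
    rw [← hspr]
    apply Nat.sSup_mem
    · refine ⟨0, ∅, ⟨?_, ?_⟩, rfl⟩
      · intro p hp; exact absurd hp (Finset.notMem_empty p)
      · intro p hp; exact absurd hp (Finset.notMem_empty p)
    · refine ⟨Fintype.card (↥R × ↥C), ?_⟩
      rintro j ⟨s, _, rfl⟩
      exact Finset.card_le_univ s
  obtain ⟨s, hsind, hscard⟩ := hmem
  set q : Fin k → ↥R × ↥C := fun i => ↑(s.equivFin.symm (Fin.cast hscard.symm i)) with hqdef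
  have hq : ∀ i, q i ∈ s := fun i => (s.equivFin.symm (Fin.cast hscard.symm i)).2
  have hqinj : Function.Injective q := by
    intro i j hij
    have h2 := Subtype.ext hij (p := fun x => x ∈ s)
    have h3 := s.equivFin.symm.injective h2
    exact Fin.cast_injective _ h3
  set r : Fin k → Fin n := fun i => ↑(q i).1 with hrdef
  set c : Fin k → Fin n := fun i => ↑(q i).2 with hcdef
  have hpair : ∀ i j, i ≠ j → (q i).1 ≠ (q j).1 ∧ (q i).2 ≠ (q j).2 := by
    intro i j hij
    exact hsind.2 (q i) (hq i) (q j) (hq j) (fun h => hij (hqinj h))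
  have hrinj : Function.Injective r := by
    intro i j hij
    by_contra hne
    exact (hpair i j hne).1 (Subtype.coe_injective hij)
  have hcinj : Function.Injective c := by
    intro i j hij
    by_contra hne
    exact (hpair i j hne).2 (Subtype.coe_injective hij)
  have hco : ∀ i, r i = c i ∨ G.Adj (r i) (c i) := by
    intro i
    by_contra hcon
    push_neg at hcon
    have hent := hsind.1 (q i) (hq i)
    apply hent
    have : H (q i).1 (q i).2 = lap G (fun _ => 1) (r i) (c i) := rfl
    rw [this]
    exact lap_one_pattern G (r i) (c i) hcon.1 hcon.2
  have hkn : k < n := by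
    have : k ≤ n - 1 := hmin
    omega
  -- the combinatorial certificate
  obtain ⟨a, b, fR, fC, hRf, hCf, hadj, hedginj, hfRinj, hfCinj, hfRr, hfCc,
    hfRend, hfCend, hRtri, hCtri⟩ := exists_cert G hG hkn r c hrinj hcinj hco
  -- the edges
  set E : Fin k → Sym2 (Fin n) := fun t => s(a t, b t) with hEdef
  have hEedge : ∀ t, E t ∈ G.edgeSet := fun t => (hadj t)
  have hEinj : Function.Injective E := by
    intro t t' ht
    simp only [hEdef, Sym2.eq_iff] at ht
    exact hedginj t t' ht
  -- membership of the endpoints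
  have hfRmem : ∀ i, fR i ∈ R := by
    intro i
    obtain ⟨j, hj⟩ := hfRr i
    rw [hj, hrdef]
    exact (q j).1.2
  have hfCmem : ∀ i, fC i ∈ C := by
    intro i
    obtain ⟨j, hj⟩ := hfCc i
    rw [hj, hcdef]
    exact (q j).2.2
  set u : Fin k → ↥R := fun i => ⟨fR i, hfRmem i⟩ with hudef
  set v : Fin k → ↥C := fun i => ⟨fC i, hfCmem i⟩ with hvdef
  -- the polynomial
  set Mp : Matrix (Fin k) (Fin k) (MvPolynomial G.edgeSet ℝ) := fun i j =>
    ∑ e : G.edgeSet, MvPolynomial.X e *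
      MvPolynomial.C (edgeOuter (e : Sym2 (Fin n)) (fR i) (fC j)) with hMpdef
  set P := Mp.det with hPdef
  have heval : ∀ w : G.edgeSet → ℝ,
      MvPolynomial.eval w P = ((lapW G w).submatrix fR fC).det := by
    intro w
    rw [hPdef, RingHom.map_det]
    congr 1
    ext i j
    rw [RingHom.mapMatrix_apply, Matrix.map_apply]
    simp only [hMpdef, map_sum, _root_.map_mul, MvPolynomial.eval_X, MvPolynomial.eval_C]
    rw [Matrix.submatrix_apply, lapW, Matrix.sum_apply]
    apply Finset.sum_congr rfl
    intro e _
    rw [Matrix.smul_apply, smul_eq_mul]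
  -- the witness weight vector
  set w0 : G.edgeSet → ℝ := fun e => if ∃ t : Fin k, E t = (e : Sym2 (Fin n)) then 1 else 0
    with hw0def
  have hlapw0 : ∀ p' q' : Fin n, lapW G w0 p' q' = ∑ t : Fin k, edgeOuter (E t) p' q' := by
    intro p' q'
    rw [lapW, Matrix.sum_apply]
    have hstep : ∀ e : G.edgeSet, e ∈ (Finset.univ : Finset G.edgeSet) →
        (w0 e • edgeOuter (e : Sym2 (Fin n))) p' q'
        = if (∃ t : Fin k, E t = (e : Sym2 (Fin n))) then edgeOuter (e : Sym2 (Fin n)) p' q'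
          else 0 := by
      intro e _
      show ((if ∃ t : Fin k, E t = (e : Sym2 (Fin n)) then (1:ℝ) else 0)
          • edgeOuter (e : Sym2 (Fin n))) p' q' = _
      split_ifs with h
      · rw [Matrix.smul_apply, one_smul]
      · rw [Matrix.smul_apply, zero_smul]
    rw [Finset.sum_congr rfl hstep, ← Finset.sum_filter]
    symm
    apply Finset.sum_bij (fun (t : Fin k) (_ : t ∈ Finset.univ) => (⟨E t, hEedge t⟩ : G.edgeSet))
    · intro t _
      simp only [Finset.mem_filter, Finset.mem_univ, true_and]
      exact ⟨t, rfl⟩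
    · intro t1 _ t2 _ h
      exact hEinj (congrArg Subtype.val h)
    · intro e he
      simp only [Finset.mem_filter, Finset.mem_univ, true_and] at he
      obtain ⟨t, ht⟩ := he
      exact ⟨t, Finset.mem_univ t, Subtype.ext ht⟩
    · intro t _
      rfl
  -- factor the minor at w0
  set Xm : Matrix (Fin k) (Fin k) ℝ := fun i t => incVec (a t) (b t) (fR i) with hXmdef
  set Ym : Matrix (Fin k) (Fin k) ℝ := fun t j => incVec (a t) (b t) (fC j) with hYmdef
  have hfact : (lapW G w0).submatrix fR fC = Xm * Ym := by
    ext i j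
    rw [Matrix.mul_apply, Matrix.submatrix_apply, hlapw0]
    apply Finset.sum_congr rfl
    intro t _
    rw [hEdef]
    rw [edgeOuter_mk]
  have hXdet : Xm.det ≠ 0 := by
    rw [← Matrix.det_transpose]
    apply det_ne_zero_of_tri _ hRf
    · intro t
      exact incVec_end_ne_zero _ _ _ (hfRend t)
    · intro t t' htt h0
      exact hRtri t t' htt (incVec_ne_zero_imp _ _ _ h0)
  have hYdet : Ym.det ≠ 0 := by
    apply det_ne_zero_of_tri _ hCf
    · intro t
      exact incVec_end_ne_zero _ _ _ (hfCend t)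
    · intro t t' htt h0
      exact hCtri t t' htt (incVec_ne_zero_imp _ _ _ h0)
  have hPne : P ≠ 0 := by
    intro hP0
    have := heval w0
    rw [hP0, map_zero, hfact, Matrix.det_mul] at this
    exact mul_ne_zero hXdet hYdet this.symm
  -- a.e. the rank equals k
  apply measure_mono_null _ (mvpoly_zero_null_fintype P hPne)
  intro w hw
  simp only [Set.mem_setOf_eq] at hw ⊢
  by_contra hPw
  apply hw.2
  -- the rank computation
  have hdet : ((lapW G w).submatrix fR fC).det ≠ 0 := by
    rw [← heval w]; exact hPw
  set Bw := (lapW G w).submatrix (fun i : (R : Finset (Fin n)) => (i : Fin n))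
      (fun j : (C : Finset (Fin n)) => (j : Fin n)) with hBwdef
  have hcomp : Bw.submatrix u v = (lapW G w).submatrix fR fC := by
    ext i j
    rfl
  have hrank1 : (Bw.submatrix u v).rank = k := by
    rw [Matrix.rank_of_isUnit, Fintype.card_fin]
    rw [Matrix.isUnit_iff_isUnit_det, hcomp]
    exact isUnit_iff_ne_zero.mpr hdet
  have hge : k ≤ Bw.rank := by
    rw [← hrank1]
    exact rank_submatrix_le' Bw u v
  have hle : Bw.rank ≤ k := by
    apply le_min
    · exact Bw.rank_le_card_height.trans (le_of_eq (Fintype.card_coe R))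
    · exact Bw.rank_le_card_width.trans (le_of_eq (Fintype.card_coe C))
  exact le_antisymm hle hge
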